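/- Let M be an even squarefree integer with M/2 ≡ 5 (mod 8), and let K = ℚ(√M) with 𝔮₂ the unique prime ideal of 𝒪_K above 2. Then 𝔮₂ is not a principal ideal. -/

import Mathlib

open NumberField

/-- The real quadratic field `K = ℚ(√M)`, realized inside `ℝ`. -/
noncomputable def Ksqrt (M : ℕ) : IntermediateField ℚ ℝ :=
  IntermediateField.adjoin ℚ {Real.sqrt M}

/-- `ε` is the fundamental unit of `ℚ(√M)`: `ε > 1` and `ε` is minimal among units `> 1`. -/
def IsFundamentalUnit (M : ℕ) (ε : (𝓞 (Ksqrt M))ˣ) : Prop :=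
  1 < (((ε : 𝓞 (Ksqrt M)) : Ksqrt M) : ℝ) ∧
    ∀ u : (𝓞 (Ksqrt M))ˣ, 1 < (((u : 𝓞 (Ksqrt M)) : Ksqrt M) : ℝ) →
      (((ε : 𝓞 (Ksqrt M)) : Ksqrt M) : ℝ) ≤ (((u : 𝓞 (Ksqrt M)) : Ksqrt M) : ℝ)

/-- Given the family `Q` of ramified primes (`Q q` is the prime ideal above `q`),
this is the squarefree product ideal `𝔪_d = ∏_{q prime, q ∣ d} 𝔮_q`. -/
noncomputable def mIdeal (M : ℕ) (Q : ℕ → Ideal (𝓞 (Ksqrt M))) (d : ℕ) :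
    Ideal (𝓞 (Ksqrt M)) :=
  ∏ q ∈ d.primeFactors, Q q

section StmtAux
open Polynomial

lemma sf_not_isSquare {M : ℕ} (hMeven : Even M) (hsf : Squarefree M) : ¬ IsSquare M := by
  rintro ⟨k, hk⟩
  have h2 : (2:ℕ) ∣ k := by
    have h := hMeven.two_dvd
    rw [hk] at h
    exact ((Nat.prime_two.dvd_mul).mp h).elim id id
  obtain ⟨j, rfl⟩ := h2
  have := hsf 2 ⟨j*j, by rw [hk]; ring⟩
  norm_num at this

lemma sf_irr {M : ℕ} (hMeven : Even M) (hsf : Squarefree M) : Irrational (Real.sqrt M) :=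
  irrational_sqrt_natCast_iff.mpr (sf_not_isSquare hMeven hsf)

lemma unique_rep {M : ℕ} (hirr : Irrational (Real.sqrt M)) {a b c d : ℚ}
    (h : (a:ℝ) + b * Real.sqrt M = c + d * Real.sqrt M) : a = c ∧ b = d := by
  by_cases hbd : b = d
  · subst hbd
    refine ⟨?_, rfl⟩
    have : (a:ℝ) = c := by linarith
    exact_mod_cast this
  · exfalso
    have hne : ((d - b : ℚ) : ℝ) ≠ 0 := by
      exact_mod_cast sub_ne_zero.mpr (Ne.symm hbd)
    have : Real.sqrt M = (((a - c)/(d - b) : ℚ) : ℝ) := by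
      push_cast at hne ⊢
      field_simp
      linarith
    exact hirr ⟨(a - c)/(d - b), this.symm⟩

lemma rep_exists {M : ℕ} (x : Ksqrt M) :
    ∃ a b : ℚ, (x : ℝ) = a + b * Real.sqrt M := by
  set m := Real.sqrt M with hm
  have hm2 : m ^ 2 = (M:ℝ) := Real.sq_sqrt (by positivity)
  have hint : IsIntegral ℚ m := by
    refine ⟨X ^ 2 - C (M:ℚ), monic_X_pow_sub_C _ (by norm_num), ?_⟩
    simp [hm2]
  have h1 : (Ksqrt M).toSubalgebra = Algebra.adjoin ℚ {m} :=
    IntermediateField.adjoin_simple_toSubalgebra_of_isAlgebraic hint.isAlgebraic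
  have hx : (x : ℝ) ∈ Algebra.adjoin ℚ {m} := by
    rw [← h1]; exact x.2
  let S : Subalgebra ℚ ℝ :=
    { carrier := {y | ∃ a b : ℚ, y = a + b * m}
      mul_mem' := by
        rintro u v ⟨a, b, rfl⟩ ⟨c, d, rfl⟩
        refine ⟨a*c + M*b*d, a*d + b*c, ?_⟩
        push_cast
        linear_combination (b:ℝ) * (d:ℝ) * hm2
      add_mem' := by
        rintro u v ⟨a, b, rfl⟩ ⟨c, d, rfl⟩
        exact ⟨a + c, b + d, by push_cast; ring⟩
      algebraMap_mem' := fun q => ⟨q, 0, by simp⟩ }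
  have hle : Algebra.adjoin ℚ {m} ≤ S := Algebra.adjoin_le (by
    rintro y hy
    rw [Set.mem_singleton_iff] at hy
    exact ⟨0, 1, by simp [hy]⟩)
  exact hle hx

lemma den_lemma {M : ℕ} (hsf : Squarefree M) (u : ℚ) (k : ℤ) (h : (M:ℚ) * u^2 = k) :
    ∃ t : ℤ, u = (t:ℚ) := by
  have h1 : (M:ℚ) * (u.num:ℚ)^2 = (k:ℚ) * (u.den:ℚ)^2 := by
    have hu : (u.num : ℚ) = u * u.den := (Rat.mul_den_eq_num u).symm
    calc (M:ℚ) * (u.num:ℚ)^2 = ((M:ℚ) * u^2) * (u.den:ℚ)^2 := by rw [hu]; ring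
      _ = (k:ℚ) * (u.den:ℚ)^2 := by rw [h]
  have h2 : (M:ℤ) * (u.num)^2 = k * (u.den:ℤ)^2 := by exact_mod_cast h1
  have hdvd : (u.den:ℤ)^2 ∣ (M:ℤ) * u.num^2 := ⟨k, by linarith⟩
  have hdvdn : u.den^2 ∣ M * u.num.natAbs^2 := by
    have := Int.natAbs_dvd_natAbs.mpr hdvd
    simpa [Int.natAbs_mul, Int.natAbs_pow] using this
  have hcop : (u.den^2).Coprime (u.num.natAbs^2) := u.reduced.symm.pow _ _
  have hdM : u.den^2 ∣ M := hcop.dvd_of_dvd_mul_right hdvdn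
  have hunit := hsf u.den (by rwa [← sq])
  have hden1 : u.den = 1 := Nat.isUnit_iff.mp hunit
  refine ⟨u.num, ?_⟩
  conv_lhs => rw [← Rat.num_div_den u]
  rw [hden1]; simp

lemma int_coords {M : ℕ} (hMeven : Even M) (hsf : Squarefree M) {r : ℝ}
    (hint : IsIntegral ℤ r) {a b : ℚ} (hr : r = a + b * Real.sqrt M) :
    ∃ p q : ℤ, a = (p:ℚ) ∧ b = (q:ℚ) := by
  have hirr := sf_irr hMeven hsf
  set m := Real.sqrt M with hm
  have hm2 : m ^ 2 = (M:ℝ) := Real.sq_sqrt (by positivity)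
  by_cases hb : b = 0
  · subst hb
    have h1 : IsIntegral ℤ a := by
      rw [← isIntegral_algebraMap_iff (algebraMap ℚ ℝ).injective]
      have : algebraMap ℚ ℝ a = r := by rw [hr, eq_ratCast]; push_cast; ring
      rwa [this]
    obtain ⟨p, hp⟩ := IsIntegrallyClosed.isIntegral_iff.mp h1
    exact ⟨p, 0, by exact_mod_cast hp.symm, by norm_num⟩
  · have hintQ : IsIntegral ℚ r := hint.tower_top
    set q : ℚ[X] := (X - C a)^2 - C ((M:ℚ)*b^2) with hq
    have hdegX : ((X - C a)^2 : ℚ[X]).degree = 2 := by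
      rw [degree_pow, degree_X_sub_C]; rfl
    have hdegC : (C ((M:ℚ)*b^2)).degree < ((X - C a)^2 : ℚ[X]).degree := by
      rw [hdegX]; exact lt_of_le_of_lt degree_C_le (by norm_num)
    have hqdeg : q.degree = 2 := by
      rw [hq, degree_sub_eq_left_of_degree_lt hdegC, hdegX]
    have hqmonic : q.Monic := by
      have h1 : ((X - C a)^2 : ℚ[X]).Monic := (monic_X_sub_C a).pow 2
      exact h1.sub_of_left hdegC
    have hqnd : q.natDegree = 2 := natDegree_eq_of_degree_eq_some hqdeg
    have hroot : aeval r q = 0 := by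
      rw [hq]
      simp only [map_sub, map_pow, aeval_X, aeval_C, eq_ratCast]
      rw [hr]
      push_cast
      linear_combination (b:ℝ)^2 * hm2
    have hdvd : minpoly ℚ r ∣ q := minpoly.dvd ℚ r hroot
    have hdeg_le : (minpoly ℚ r).natDegree ≤ 2 := by
      have := natDegree_le_of_dvd hdvd hqmonic.ne_zero
      omega
    have hdeg_pos : 0 < (minpoly ℚ r).natDegree := minpoly.natDegree_pos hintQ
    have hmon := minpoly.monic hintQ
    have hdeg_ne1 : (minpoly ℚ r).natDegree ≠ 1 := by
      intro h1
      have heq1 := hmon.eq_X_add_C h1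
      have haev := minpoly.aeval ℚ r
      rw [heq1] at haev
      simp only [map_add, aeval_X, aeval_C] at haev
      have hirrr : Irrational r := by
        rw [hr]; exact ((hirr.ratCast_mul hb).ratCast_add (q := a))
      refine hirrr ⟨-((minpoly ℚ r).coeff 0), ?_⟩
      have : algebraMap ℚ ℝ ((minpoly ℚ r).coeff 0) = (((minpoly ℚ r).coeff 0 : ℚ) : ℝ) := by
        rw [eq_ratCast]
      rw [this] at haev
      push_cast
      linarith
    have hdeg2 : (minpoly ℚ r).natDegree = 2 := by omega
    have heqq : minpoly ℚ r = q := by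
      obtain ⟨c, hc⟩ := hdvd
      have hcm : c.Monic := hmon.of_mul_monic_left (hc ▸ hqmonic)
      have hcnd : c.natDegree = 0 := by
        have h0 := natDegree_mul (hmon.ne_zero) (hcm.ne_zero)
        rw [← hc, hqnd, hdeg2] at h0
        omega
      have hc1 : c = 1 := hcm.natDegree_eq_zero.mp hcnd
      rw [hc, hc1, mul_one]
    have hZ : minpoly ℚ r = (minpoly ℤ r).map (algebraMap ℤ ℚ) := by
      simpa using minpoly.isIntegrallyClosed_eq_field_fractions ℚ ℝ hint
    have hcoeff : ∀ i, ∃ z : ℤ, (z:ℚ) = q.coeff i := by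
      intro i
      refine ⟨(minpoly ℤ r).coeff i, ?_⟩
      rw [← heqq, hZ, coeff_map]
      simp
    have hqexp : q = X^2 - C (2*a) * X + C (a^2 - (M:ℚ)*b^2) := by
      rw [hq]; simp only [C_sub, C_mul, C_pow, map_ofNat]; ring
    obtain ⟨z1, hz1⟩ := hcoeff 1
    obtain ⟨z0, hz0⟩ := hcoeff 0
    rw [hqexp] at hz1 hz0
    simp only [coeff_add, coeff_sub, coeff_X_pow, coeff_C_mul, coeff_X, coeff_C] at hz1 hz0
    norm_num at hz1 hz0
    have hMu : (M:ℚ) * (2*b)^2 = ((z1^2 - 4*z0 : ℤ):ℚ) := by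
      push_cast
      linear_combination (2*a - (z1:ℚ)) * hz1 + 4 * hz0
    obtain ⟨t, ht⟩ := den_lemma hsf (2*b) _ hMu
    have hkey : z1^2 - (M:ℤ)*t^2 = 4*z0 := by
      have : ((z1:ℚ))^2 - (M:ℚ)*((t:ℚ))^2 = 4*(z0:ℚ) := by
        rw [← ht]
        linear_combination ((z1:ℚ) - 2*a) * hz1 - 4*hz0
      exact_mod_cast this
    have hM4 : M % 4 = 2 := by
      obtain ⟨k, hk⟩ := hMeven
      have h4 : ¬ (2*2 ∣ M) := fun hd => by simpa using hsf 2 hd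
      omega
    have hM4c : ((M:ℕ) : ZMod 4) = 2 := by
      rw [← ZMod.natCast_mod M 4, hM4]; rfl
    have hz4 : ((z1 : ZMod 4))^2 = 2 * ((t : ZMod 4))^2 := by
      have h := congrArg (Int.cast : ℤ → ZMod 4) hkey
      push_cast at h
      rw [hM4c] at h
      have h40 : (4 : ZMod 4) = 0 := rfl
      linear_combination h + (z0 : ZMod 4) * h40
    have hdec : ∀ x y : ZMod 4, x^2 = 2*y^2 →
        ((ZMod.castHom (by norm_num : (2:ℕ) ∣ 4) (ZMod 2)) x = 0 ∧
         (ZMod.castHom (by norm_num : (2:ℕ) ∣ 4) (ZMod 2)) y = 0) := by decide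
    obtain ⟨hx2, hy2⟩ := hdec _ _ hz4
    rw [map_intCast] at hx2 hy2
    have hdz1 : (2:ℤ) ∣ z1 := by
      rwa [ZMod.intCast_zmod_eq_zero_iff_dvd] at hx2
    have hdt : (2:ℤ) ∣ t := by
      rwa [ZMod.intCast_zmod_eq_zero_iff_dvd] at hy2
    obtain ⟨p, rfl⟩ := hdz1
    obtain ⟨qq, rfl⟩ := hdt
    refine ⟨-p, qq, ?_, ?_⟩
    · have : ((2*p : ℤ):ℚ) = -(2*a) := hz1
      push_cast at this ⊢
      linarith
    · have : (2*b : ℚ) = ((2*qq : ℤ):ℚ) := ht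
      push_cast at this ⊢
      linarith

/-- The canonical embedding of the ring of integers into `ℝ`. -/
noncomputable def phiK (M : ℕ) : 𝓞 (Ksqrt M) →+* ℝ :=
  (algebraMap (Ksqrt M) ℝ).comp (algebraMap (𝓞 (Ksqrt M)) (Ksqrt M))

lemma phiK_inj (M : ℕ) : Function.Injective (phiK M) :=
  (algebraMap (Ksqrt M) ℝ).injective.comp RingOfIntegers.coe_injective

end StmtAux

set_option maxHeartbeats 1000000 in
set_option synthInstance.maxHeartbeats 400000 in
/-- For `M` even squarefree with `M/2 ≡ 5 (mod 8)`, the prime ideal `𝔮₂` of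
`𝒪_K` above `2` (`K = ℚ(√M)`) is not principal. -/
theorem stmt_11 (M : ℕ) (hMeven : Even M) (hsf : Squarefree M) (hM8 : M / 2 % 8 = 5)
    [NumberField (Ksqrt M)]
    (Q2 : Ideal (𝓞 (Ksqrt M))) (hQ2 : Q2.IsPrime ∧ (2 : 𝓞 (Ksqrt M)) ∈ Q2) :
    ¬ Q2.IsPrincipal := by
  intro hpr
  obtain ⟨hprime, h2Q⟩ := hQ2
  obtain ⟨α, hspan⟩ := hpr.principal
  set m := Real.sqrt M with hmdef
  have hm2 : m ^ 2 = (M:ℝ) := Real.sq_sqrt (by positivity)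
  have hirr := sf_irr hMeven hsf
  -- √M as an algebraic integer
  have hmem : m ∈ Ksqrt M := IntermediateField.mem_adjoin_simple_self ℚ _
  have hsqint : IsIntegral ℤ (⟨m, hmem⟩ : Ksqrt M) := by
    refine ⟨Polynomial.X^2 - Polynomial.C (M:ℤ), Polynomial.monic_X_pow_sub_C _ (by norm_num), ?_⟩
    simp only [Polynomial.eval₂_sub, Polynomial.eval₂_pow, Polynomial.eval₂_X,
      Polynomial.eval₂_C, map_intCast]
    rw [sub_eq_zero]
    apply Subtype.val_injective
    push_cast
    exact hm2
  set SqM : 𝓞 (Ksqrt M) := ⟨⟨m, hmem⟩, hsqint⟩ with hSqM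
  have hphiSq : phiK M SqM = m := rfl
  -- M ∈ Q2 and √M ∈ Q2
  have hMQ : ((M:ℕ) : 𝓞 (Ksqrt M)) ∈ Q2 := by
    obtain ⟨k, hk⟩ := hMeven
    have hMk : ((M:ℕ) : 𝓞 (Ksqrt M)) = (k : 𝓞 (Ksqrt M)) * 2 := by
      rw [hk]; push_cast; ring
    rw [hMk]
    exact Ideal.mul_mem_left _ _ h2Q
  have hsqQ : SqM ∈ Q2 := by
    have hsq : SqM * SqM = ((M:ℕ) : 𝓞 (Ksqrt M)) := by
      apply phiK_inj M
      rw [map_mul, hphiSq, map_natCast, ← sq]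
      exact hm2
    rcases hprime.mem_or_mem (hsq ▸ hMQ) with h | h <;> exact h
  -- divisibilities
  have hd2 : α ∣ 2 := by
    rw [← Ideal.mem_span_singleton, ← Ideal.submodule_span_eq, ← hspan]
    exact h2Q
  have hdm : α ∣ SqM := by
    rw [← Ideal.mem_span_singleton, ← Ideal.submodule_span_eq, ← hspan]
    exact hsqQ
  obtain ⟨β, hβ⟩ := hd2
  obtain ⟨γ, hγ⟩ := hdm
  -- integer coordinates
  have coords : ∀ x : 𝓞 (Ksqrt M), ∃ a b : ℤ, phiK M x = a + b * m := by
    intro x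
    obtain ⟨a, b, hab⟩ := rep_exists (x : Ksqrt M)
    have hxint : IsIntegral ℤ (phiK M x) := by
      have := (RingOfIntegers.isIntegral_coe x).map (IsScalarTower.toAlgHom ℤ (Ksqrt M) ℝ)
      exact this
    have hab' : phiK M x = a + b * m := hab
    obtain ⟨p, q, hp, hq⟩ := int_coords hMeven hsf hxint hab'
    exact ⟨p, q, by rw [hab', hp, hq]; push_cast; ring⟩
  obtain ⟨a, b, hA⟩ := coords α
  obtain ⟨c, d, hB⟩ := coords β
  obtain ⟨e, f, hC⟩ := coords γ
  -- equation from 2 = α β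
  have hβR : (2:ℝ) = (a + b*m) * (c + d*m) := by
    have h1 := congrArg (phiK M) hβ
    rw [map_mul, hA, hB] at h1
    rw [← h1, map_ofNat]
  have e12 := unique_rep hirr (a := (2:ℚ)) (b := (0:ℚ))
      (c := ((a*c + M*b*d : ℤ):ℚ)) (d := ((a*d + b*c : ℤ):ℚ)) (by
    push_cast
    linear_combination hβR + (b:ℝ) * (d:ℝ) * hm2)
  have e1 : a*c + (M:ℤ)*b*d = 2 := by exact_mod_cast e12.1.symm
  have e2 : a*d + b*c = 0 := by exact_mod_cast e12.2.symm
  -- equation from √M = α γ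
  have hγR : m = (a + b*m) * (e + f*m) := by
    have h1 := congrArg (phiK M) hγ
    rw [map_mul, hA, hC, hphiSq] at h1
    exact h1
  have e34 := unique_rep hirr (a := (0:ℚ)) (b := (1:ℚ))
      (c := ((a*e + M*b*f : ℤ):ℚ)) (d := ((a*f + b*e : ℤ):ℚ)) (by
    push_cast
    linear_combination hγR + (b:ℝ) * (f:ℝ) * hm2)
  have e3 : a*e + (M:ℤ)*b*f = 0 := by exact_mod_cast e34.1.symm
  have e4 : a*f + b*e = 1 := by exact_mod_cast e34.2.symm
  -- the norm n
  set n : ℤ := a^2 - (M:ℤ)*b^2 with hn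
  have hn4 : n * (c^2 - (M:ℤ)*d^2) = 4 := by
    rw [hn]
    linear_combination (a*c + (M:ℤ)*b*d + 2) * e1 - (M:ℤ)*(a*d + b*c) * e2
  have hnM : n * (e^2 - (M:ℤ)*f^2) = -(M:ℤ) := by
    rw [hn]
    linear_combination (a*e + (M:ℤ)*b*f) * e3 - (M:ℤ)*(a*f + b*e + 1) * e4
  have hM4 : M % 4 = 2 := by
    obtain ⟨k, hk⟩ := hMeven
    have h4 : ¬ (2*2 ∣ M) := fun hd => by simpa using hsf 2 hd
    omega
  have hn2 : n ∣ 2 := by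
    have hd4 : n ∣ 4 := ⟨_, hn4.symm⟩
    have hdM : n ∣ (M:ℤ) := by
      refine ⟨-(e^2 - (M:ℤ)*f^2), ?_⟩
      linarith [hnM]
    have hM42 : (M:ℤ) - 4*((M:ℤ)/4) = 2 := by omega
    have := dvd_sub hdM (hd4.mul_right ((M:ℤ)/4))
    rwa [hM42] at this
  have habs : n.natAbs ∣ 2 := by
    have := Int.natAbs_dvd_natAbs.mpr hn2
    simpa using this
  rcases (Nat.dvd_prime Nat.prime_two).mp habs with h1 | h2
  · -- n = ±1 : α is a unit, contradiction with Q2 prime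
    have hn1 : n = 1 ∨ n = -1 := Int.natAbs_eq_iff.mp h1 |>.imp (by simp) (by simp)
    set αbar : 𝓞 (Ksqrt M) := (a : 𝓞 (Ksqrt M)) - (b : 𝓞 (Ksqrt M)) * SqM with hαbar
    have hprod : α * αbar = (n : 𝓞 (Ksqrt M)) := by
      apply phiK_inj M
      have hbar : phiK M αbar = (a:ℝ) - (b:ℝ) * m := by
        rw [hαbar]
        simp only [map_sub, map_mul, map_intCast, hphiSq]
      rw [map_mul, hA, hbar, map_intCast]
      push_cast [hn]
      linear_combination -(b:ℝ)^2 * hm2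
    have hu : IsUnit α := by
      rcases hn1 with h | h
      · exact IsUnit.of_mul_eq_one αbar (by rw [hprod, h]; norm_num)
      · exact IsUnit.of_mul_eq_one (-αbar) (by rw [mul_neg, hprod, h]; norm_num)
    have : Q2 = ⊤ := by
      rw [hspan, Ideal.submodule_span_eq, Ideal.span_singleton_eq_top.mpr hu]
    exact hprime.ne_top this
  · -- n = ±2 : contradiction mod 16
    have hn2' : n = 2 ∨ n = -2 := Int.natAbs_eq_iff.mp h2 |>.imp (by simp) (by simp)
    have hM16 : M % 16 = 10 := by
      obtain ⟨k, hk⟩ := hMeven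
      omega
    have hM16c : ((M:ℕ) : ZMod 16) = 10 := by
      rw [← ZMod.natCast_mod M 16, hM16]; rfl
    have hdec2 : ∀ x y : ZMod 16, x^2 - 10*y^2 ≠ 2 ∧ x^2 - 10*y^2 ≠ -2 := by decide
    rcases hn2' with h | h
    · have hcast := congrArg (Int.cast : ℤ → ZMod 16) (hn ▸ h : a^2 - (M:ℤ)*b^2 = 2)
      push_cast at hcast
      rw [hM16c] at hcast
      exact (hdec2 (a : ZMod 16) (b : ZMod 16)).1 hcast
    · have hcast := congrArg (Int.cast : ℤ → ZMod 16) (hn ▸ h : a^2 - (M:ℤ)*b^2 = -2)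
      push_cast at hcast
      rw [hM16c] at hcast
      exact (hdec2 (a : ZMod 16) (b : ZMod 16)).2 hcast
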